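/- Let 0 < q < 1, let A(ω) = a₁ω + a₀, B(ω) = b₂ω² + b₁ω + b₀ be real polynomials, let a ≤ 0 ≤ b, and let ϱ : ℝ → ℝ be continuous at 0, satisfy the q-Pearson equation ∂_q(ϱ·B)(ω) = ϱ(ω)A(ω) for all ω ≠ 0, and satisfy ϱ(a)B(a) = ϱ(b)B(b) = 0. Assume that for every n ≥ 0 the Jackson integral μ_n := ∫_a^b ωⁿ ϱ(ω) d_qω converges absolutely. Then the moments satisfy a₁μ₁ + a₀μ₀ = 0 and, for every n ≥ 1, −[n]·(b₂μ_{n+1} + b₁μ_n + b₀μ_{n−1}) = qⁿ·(a₁μ_{n+1} + a₀μ_n), where [n] = (1−qⁿ)/(1−q). -/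

import Mathlib

/-- The q-derivative of a function: `(∂_q f)(ω) = (f(ω) − f(qω))/((1−q)ω)` (junk at `ω = 0`). -/
noncomputable def qD (q : ℝ) (f : ℝ → ℝ) (ω : ℝ) : ℝ :=
  (f ω - f (q * ω)) / ((1 - q) * ω)

/-- The Jackson integral `∫_a^b f(ω) d_qω = (1−q)·∑_{k=0}^∞ qᵏ(b·f(qᵏb) − a·f(qᵏa))`. -/
noncomputable def jackson (q a b : ℝ) (f : ℝ → ℝ) : ℝ :=
  (1 - q) * ∑' k : ℕ, q ^ k * (b * f (q ^ k * b) - a * f (q ^ k * a))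

/-- Absolute convergence of the Jackson integral of `f` on `[a,b]`. -/
def JacksonSummable (q a b : ℝ) (f : ℝ → ℝ) : Prop :=
  Summable fun k : ℕ => |q ^ k * (b * f (q ^ k * b) - a * f (q ^ k * a))|

/-- Let `0 < q < 1`, `A(ω) = a₁ω + a₀`, `B(ω) = b₂ω² + b₁ω + b₀`,
`a ≤ 0 ≤ b`, and let `ϱ` be continuous at `0`, satisfy the q-Pearson equation for
`ω ≠ 0` and the boundary conditions `ϱ(a)B(a) = ϱ(b)B(b) = 0`.  Assume all the moments
`μ_n = ∫_a^b ωⁿ ϱ(ω) d_qω` converge absolutely.  Then `a₁μ₁ + a₀μ₀ = 0` and, for every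
`n ≥ 1`, `−[n](b₂μ_{n+1} + b₁μ_n + b₀μ_{n−1}) = qⁿ(a₁μ_{n+1} + a₀μ_n)`, where
`[n] = (1−qⁿ)/(1−q)`. -/
theorem stmt_11 (q a₀ a₁ b₀ b₁ b₂ a b : ℝ) (hq0 : 0 < q) (hq1 : q < 1)
    (hab : a ≤ 0 ∧ 0 ≤ b)
    (A B : ℝ → ℝ)
    (hA : ∀ ω : ℝ, A ω = a₁ * ω + a₀)
    (hB : ∀ ω : ℝ, B ω = b₂ * ω ^ 2 + b₁ * ω + b₀)
    (ϱ : ℝ → ℝ) (hcont : ContinuousAt ϱ 0)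
    (hPearson : ∀ ω : ℝ, ω ≠ 0 →
      qD q (fun x => ϱ x * B x) ω = ϱ ω * A ω)
    (hbdry : ϱ a * B a = 0 ∧ ϱ b * B b = 0)
    (hsum : ∀ n : ℕ, JacksonSummable q a b (fun ω => ω ^ n * ϱ ω))
    (μ : ℕ → ℝ)
    (hμ : ∀ n : ℕ, μ n = jackson q a b (fun ω => ω ^ n * ϱ ω)) :
    a₁ * μ 1 + a₀ * μ 0 = 0 ∧
    ∀ n : ℕ, 1 ≤ n →
      -((1 - q ^ n) / (1 - q)) * (b₂ * μ (n + 1) + b₁ * μ n + b₀ * μ (n - 1))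
        = q ^ n * (a₁ * μ (n + 1) + a₀ * μ n) := by
  obtain ⟨hb0, hbB⟩ := hbdry
  have hq1' : (1 : ℝ) - q ≠ 0 := by linarith
  have hqne : q ≠ 0 := ne_of_gt hq0
  set g : ℝ → ℝ := fun x => ϱ x * B x with hg
  set D : ℕ → ℕ → ℝ := fun n k =>
    q ^ k * (b * ((q ^ k * b) ^ n * ϱ (q ^ k * b)) - a * ((q ^ k * a) ^ n * ϱ (q ^ k * a)))
    with hD
  have sD : ∀ n : ℕ, Summable (D n) := by
    intro n
    exact summable_abs_iff.mp (hsum n)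
  have hμD : ∀ n : ℕ, μ n = (1 - q) * ∑' k, D n k := by
    intro n
    rw [hμ n, jackson]
  -- the key pointwise Pearson identity
  have key : ∀ (c : ℝ) (n k : ℕ),
      (q ^ k * c) ^ n * g (q ^ k * c) - (q ^ k * c) ^ n * g (q * (q ^ k * c))
        = (1 - q) * (q ^ k * (c * (a₁ * ((q ^ k * c) ^ (n + 1) * ϱ (q ^ k * c))
            + a₀ * ((q ^ k * c) ^ n * ϱ (q ^ k * c))))) := by
    intro c n k
    by_cases hc : c = 0
    · simp [hc]
    · have hω : q ^ k * c ≠ 0 := mul_ne_zero (pow_ne_zero _ hqne) hc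
      have hP := hPearson (q ^ k * c) hω
      rw [qD] at hP
      have hne : (1 - q) * (q ^ k * c) ≠ 0 := mul_ne_zero hq1' hω
      have hP' : g (q ^ k * c) - g (q * (q ^ k * c))
          = ϱ (q ^ k * c) * A (q ^ k * c) * ((1 - q) * (q ^ k * c)) := by
        have := (div_eq_iff hne).mp hP
        simpa [hg] using this
      have := congrArg (fun t => (q ^ k * c) ^ n * t) hP'
      simp only [mul_sub] at this
      rw [this, hA]
      ring
  set F : ℕ → ℕ → ℝ := fun n k =>
    (q ^ k * b) ^ n * g (q ^ k * b) - (q ^ k * a) ^ n * g (q ^ k * a) with hF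
  have step3 : ∀ n k : ℕ, q ^ n * F n k - F n (k + 1)
      = q ^ n * ((1 - q) * (a₁ * D (n + 1) k + a₀ * D n k)) := by
    intro n k
    have kb := key b n k
    have ka := key a n k
    have e1 : q ^ (k + 1) * b = q * (q ^ k * b) := by ring
    have e2 : q ^ (k + 1) * a = q * (q ^ k * a) := by ring
    simp only [hF, hD, e1, e2, mul_pow]
    linear_combination q ^ n * kb - q ^ n * ka
  have step4 : ∀ m k : ℕ, F (m + 1) k = b₂ * D (m + 2) k + b₁ * D (m + 1) k + b₀ * D m k := by
    intro m k
    simp only [hF, hD, hg, hB]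
    ring
  have sF : ∀ m : ℕ, Summable (F (m + 1)) := by
    intro m
    have : (fun k => b₂ * D (m + 2) k + b₁ * D (m + 1) k + b₀ * D m k) = F (m + 1) := by
      funext k; rw [step4]
    rw [← this]
    exact (((sD (m + 2)).mul_left b₂).add ((sD (m + 1)).mul_left b₁)).add ((sD m).mul_left b₀)
  have tsumF : ∀ m : ℕ, ∑' k, F (m + 1) k
      = b₂ * ∑' k, D (m + 2) k + b₁ * ∑' k, D (m + 1) k + b₀ * ∑' k, D m k := by
    intro m
    calc ∑' k, F (m + 1) k
        = ∑' k, (b₂ * D (m + 2) k + b₁ * D (m + 1) k + b₀ * D m k) :=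
          tsum_congr fun k => step4 m k
      _ = b₂ * ∑' k, D (m + 2) k + b₁ * ∑' k, D (m + 1) k + b₀ * ∑' k, D m k := by
          rw [Summable.tsum_add (((sD (m + 2)).mul_left b₂).add ((sD (m + 1)).mul_left b₁))
              ((sD m).mul_left b₀),
            Summable.tsum_add ((sD (m + 2)).mul_left b₂) ((sD (m + 1)).mul_left b₁),
            tsum_mul_left, tsum_mul_left, tsum_mul_left]
  have hF0 : ∀ n : ℕ, F n 0 = 0 := by
    intro n
    simp [hF, hg, hbB, hb0]
  -- the case n = 0 : telescoping
  constructor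
  · have htel : ∀ K : ℕ, ∑ k ∈ Finset.range K, (F 0 k - F 0 (k + 1)) = F 0 0 - F 0 K :=
      fun K => Finset.sum_range_sub' (F 0) K
    have hgc : ContinuousAt g 0 := by
      have hBc : Continuous B := by
        have : B = fun ω => b₂ * ω ^ 2 + b₁ * ω + b₀ := funext hB
        rw [this]; continuity
      exact hcont.mul hBc.continuousAt
    have hqb : Filter.Tendsto (fun K : ℕ => q ^ K * b) Filter.atTop (nhds 0) := by
      have := (tendsto_pow_atTop_nhds_zero_of_lt_one (le_of_lt hq0) hq1).mul_const b
      simpa using this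
    have hqa : Filter.Tendsto (fun K : ℕ => q ^ K * a) Filter.atTop (nhds 0) := by
      have := (tendsto_pow_atTop_nhds_zero_of_lt_one (le_of_lt hq0) hq1).mul_const a
      simpa using this
    have hlim : Filter.Tendsto (fun K : ℕ => F 0 K) Filter.atTop (nhds 0) := by
      have h1 := (hgc.tendsto.comp hqb).sub (hgc.tendsto.comp hqa)
      simp only [sub_self] at h1
      have : (fun K : ℕ => F 0 K) = fun K : ℕ => g (q ^ K * b) - g (q ^ K * a) := by
        funext K; simp [hF]
      rw [this]
      exact h1
    have hsum0 : Summable (fun k => F 0 k - F 0 (k + 1)) := by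
      have : (fun k => F 0 k - F 0 (k + 1))
          = fun k => (1 - q) * (a₁ * D 1 k + a₀ * D 0 k) := by
        funext k
        have := step3 0 k
        simpa using this
      rw [this]
      exact (((sD 1).mul_left a₁).add ((sD 0).mul_left a₀)).mul_left (1 - q)
    have hzero : ∑' k, (F 0 k - F 0 (k + 1)) = 0 := by
      have hts : Filter.Tendsto (fun K => ∑ k ∈ Finset.range K, (F 0 k - F 0 (k + 1)))
          Filter.atTop (nhds 0) := by
        have : (fun K => ∑ k ∈ Finset.range K, (F 0 k - F 0 (k + 1)))
            = fun K => F 0 0 - F 0 K := funext htel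
        rw [this, hF0 0]
        simpa using hlim.neg
      exact ((hsum0.hasSum_iff_tendsto_nat).mpr hts).tsum_eq
    have heq : ∑' k, (F 0 k - F 0 (k + 1))
        = (1 - q) * (a₁ * ∑' k, D 1 k + a₀ * ∑' k, D 0 k) := by
      calc ∑' k, (F 0 k - F 0 (k + 1))
          = ∑' k, (1 - q) * (a₁ * D 1 k + a₀ * D 0 k) := by
            refine tsum_congr fun k => ?_
            have := step3 0 k
            simpa using this
        _ = (1 - q) * (a₁ * ∑' k, D 1 k + a₀ * ∑' k, D 0 k) := by
            rw [tsum_mul_left, Summable.tsum_add ((sD 1).mul_left a₁) ((sD 0).mul_left a₀),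
              tsum_mul_left, tsum_mul_left]
    rw [hμD 1, hμD 0]
    have : (1 - q) * (a₁ * ∑' k, D 1 k + a₀ * ∑' k, D 0 k) = 0 := by
      rw [← heq, hzero]
    linear_combination this
  -- the case n ≥ 1
  · intro n hn
    obtain ⟨m, rfl⟩ : ∃ m, n = m + 1 := ⟨n - 1, (Nat.succ_pred_eq_of_pos hn).symm⟩
    set n := m + 1
    have sFm := sF m
    have sFshift : Summable (fun k => F n (k + 1)) := (summable_nat_add_iff 1).mpr sFm
    have hshift : ∑' k, F n (k + 1) = ∑' k, F n k := by
      have := Summable.tsum_eq_zero_add sFm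
      rw [this, hF0 n]
      ring
    have hmain : (q ^ n - 1) * ∑' k, F n k
        = q ^ n * ((1 - q) * (a₁ * ∑' k, D (n + 1) k + a₀ * ∑' k, D n k)) := by
      have lhs : ∑' k, (q ^ n * F n k - F n (k + 1)) = (q ^ n - 1) * ∑' k, F n k := by
        rw [Summable.tsum_sub (sFm.mul_left (q ^ n)) sFshift, tsum_mul_left, hshift]
        ring
      have rhs : ∑' k, (q ^ n * F n k - F n (k + 1))
          = q ^ n * ((1 - q) * (a₁ * ∑' k, D (n + 1) k + a₀ * ∑' k, D n k)) := by
        calc ∑' k, (q ^ n * F n k - F n (k + 1))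
            = ∑' k, q ^ n * ((1 - q) * (a₁ * D (n + 1) k + a₀ * D n k)) :=
              tsum_congr fun k => step3 n k
          _ = q ^ n * ((1 - q) * (a₁ * ∑' k, D (n + 1) k + a₀ * ∑' k, D n k)) := by
              rw [tsum_mul_left, tsum_mul_left,
                Summable.tsum_add ((sD (n + 1)).mul_left a₁) ((sD n).mul_left a₀),
                tsum_mul_left, tsum_mul_left]
      rw [← lhs, rhs]
    have hsub : n - 1 = m := rfl
    rw [hsub, hμD (n + 1), hμD n, hμD m]
    have htF := tsumF m
    have hqn : q ^ n ≠ 0 := pow_ne_zero _ hqne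
    rw [htF] at hmain
    have hdiv : -((1 - q ^ n) / (1 - q)) *
        (b₂ * ((1 - q) * ∑' k, D (n + 1) k) + b₁ * ((1 - q) * ∑' k, D n k)
          + b₀ * ((1 - q) * ∑' k, D m k))
        = -(1 - q ^ n) * (b₂ * ∑' k, D (n + 1) k + b₁ * ∑' k, D n k + b₀ * ∑' k, D m k) := by
      field_simp
    rw [hdiv]
    linear_combination hmain
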